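/- Let G be a torsion-free commutative group, λ ∈ G, and Δ₁, Δ₂ finite nonempty symmetric subsets of G (i.e. {d⁻¹ : d ∈ Δᵢ} = Δᵢ for i = 1, 2). Set Δ = {λ * d₁ * d₂ : d₁ ∈ Δ₁, d₂ ∈ Δ₂}. Then for η ∈ G one has {η * δ⁻¹ : δ ∈ Δ} = Δ if and only if η = λ². -/

import Mathlib

theorem translate_inv_eq_self_iff_lambda_sq {G : Type*} [CommGroup G] [DecidableEq G]
    (htf : ∀ g : G, ∀ k : ℕ, 0 < k → g ^ k = 1 → g = 1)
    (lam : G) (Δ₁ Δ₂ : Finset G) (hΔ₁ : Δ₁.Nonempty) (hΔ₂ : Δ₂.Nonempty)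
    (hΔ₁sym : Δ₁.image (fun d => d⁻¹) = Δ₁)
    (hΔ₂sym : Δ₂.image (fun d => d⁻¹) = Δ₂)
    (Δ : Finset G)
    (hΔ : Δ = (Δ₁ ×ˢ Δ₂).image (fun p => lam * p.1 * p.2))
    (η : G) :
    Δ.image (fun δ => η * δ⁻¹) = Δ ↔ η = lam ^ 2 := by
  have hne : Δ.Nonempty := by
    obtain ⟨a, ha⟩ := hΔ₁; obtain ⟨b, hb⟩ := hΔ₂
    exact ⟨lam * a * b, by
      rw [hΔ]
      exact Finset.mem_image.2 ⟨(a, b), Finset.mem_product.2 ⟨ha, hb⟩, rfl⟩⟩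
  have hmem₁ : ∀ d ∈ Δ₁, d⁻¹ ∈ Δ₁ := fun d hd => by
    rw [← hΔ₁sym]; exact Finset.mem_image.2 ⟨d, hd, rfl⟩
  have hmem₂ : ∀ d ∈ Δ₂, d⁻¹ ∈ Δ₂ := fun d hd => by
    rw [← hΔ₂sym]; exact Finset.mem_image.2 ⟨d, hd, rfl⟩
  have hinj : Function.Injective (fun δ : G => lam ^ 2 * δ⁻¹) := by
    intro a b h
    simpa using inv_injective (mul_left_cancel h)
  have hsq : Δ.image (fun δ => lam ^ 2 * δ⁻¹) = Δ := by
    apply Finset.eq_of_subset_of_card_le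
    · intro x hx
      obtain ⟨δ, hδ, rfl⟩ := Finset.mem_image.1 hx
      rw [hΔ] at hδ ⊢
      obtain ⟨⟨d₁, d₂⟩, hp, rfl⟩ := Finset.mem_image.1 hδ
      have hp' := Finset.mem_product.1 hp
      refine Finset.mem_image.2 ⟨(d₁⁻¹, d₂⁻¹),
        Finset.mem_product.2 ⟨hmem₁ _ hp'.1, hmem₂ _ hp'.2⟩, ?_⟩
      show lam * d₁⁻¹ * d₂⁻¹ = lam ^ 2 * (lam * d₁ * d₂)⁻¹
      simp [pow_two, mul_inv_rev, mul_comm, mul_left_comm, mul_assoc]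
    · rw [Finset.card_image_of_injective _ hinj]
  constructor
  · intro h
    have hc : Δ.image (fun δ => (lam ^ 2 * η⁻¹) * δ) = Δ := by
      conv_rhs => rw [← hsq, ← h]
      rw [Finset.image_image]
      apply Finset.image_congr
      intro δ _
      show lam ^ 2 * η⁻¹ * δ = lam ^ 2 * (η * δ⁻¹)⁻¹
      simp [pow_two, mul_inv_rev, mul_comm, mul_left_comm, mul_assoc]
    have hprod := congrArg (fun s => ∏ x ∈ s, x) hc
    rw [Finset.prod_image (fun a _ b _ h => mul_left_cancel h)] at hprod
    rw [Finset.prod_mul_distrib, Finset.prod_const] at hprod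
    have hcard : 0 < Δ.card := Finset.card_pos.2 hne
    have h1 : (lam ^ 2 * η⁻¹) = 1 :=
      htf _ _ hcard ((mul_eq_right).1 hprod)
    have := mul_inv_eq_one.1 h1
    exact this.symm
  · intro h; subst h; exact hsq
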